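/- (Theorem 1, lower bound on the order.) Assume no two ghost positions are consecutive, i.e. ι k + 1 < ι (k+1) for all k with k + 1 ≤ m − 1, and assume 1 < ι 0 and ι (m−1) < n + m. Let v : ℝ and w : ℕ → ℝ, and suppose there exists i with 1 ≤ i < ι 0 and w i ≠ 0. Then every multivariate polynomial p : MvPolynomial (Fin (n+m)) ℝ satisfying, for every choice of input bits b : ℕ → ℤ with b k ∈ {0,1} for all k and every c implementing the m-plus-bits interface for b, the identity v + ∑_{i=1}^{n} w i * (φ* i : ℝ) = MvPolynomial.eval (fun t : Fin (n+m) => ((φ (t + 1)) : ℝ)) p, has total degree at least 2*m + 1. (Together with the matching upper bound, the separating polynomial of the interfaced APUF is of order exactly 2m+1 in this case.) -/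

import Mathlib

set_option linter.unusedSectionVars false
set_option linter.unusedVariables false


/-- `c` implements the `m`-plus-bits challenge interface for input bits `b`,
with ghost-bit positions `ι 0 < ι 1 < ... < ι (m-1)`, for an `n`-stage PUF. -/
def MPlusBitsInterface (n m : ℕ) (hm : 1 ≤ m) (ι : Fin m → ℕ)
    (b c : ℕ → ℤ) : Prop :=
  (∀ i, 1 ≤ i → i < ι ⟨0, hm⟩ → c i = b i) ∧
  (∀ k (hk : k + 1 ≤ m - 1), ∀ i,
    ι ⟨k, by omega⟩ < i → i < ι ⟨k + 1, by omega⟩ → c (i - (k + 1)) = b i) ∧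
  (∀ i, ι ⟨m - 1, by omega⟩ < i → i ≤ n + m → c (i - m) = b i)

namespace S10
open Finset

variable {m : ℕ} {ι : Fin m → ℕ}

def sh (ι : Fin m → ℕ) (j : ℕ) : ℕ := #(univ.filter fun l : Fin m => ι l ≤ j + (l : ℕ))
def gg (ι : Fin m → ℕ) (j : ℕ) : ℕ := j + sh ι j
def bb (N : ℕ) (ε : Fin N → Bool) (j : ℕ) : ℤ :=
  if h : 1 ≤ j ∧ j ≤ N then (if ε ⟨j - 1, by omega⟩ then 1 else 0) else 0
def Yr (N : ℕ) (ε : Fin N → Bool) (j : ℕ) : ℝ := ((2 * bb N ε j - 1 : ℤ) : ℝ)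
def xcoord (N : ℕ) (ε : Fin N → Bool) (t : Fin N) : ℝ := ∏ k ∈ Icc ((t:ℕ)+1) N, Yr N ε k
def cum (N : ℕ) (e : Fin N → ℕ) (k : ℕ) : ℕ :=
  ∑ t ∈ univ.filter (fun t : Fin N => (t:ℕ) < k), e t
def sig (ι : Fin m → ℕ) (i₀ N : ℕ) (t : Fin N) : ℕ :=
  (if (t:ℕ) = i₀ - 1 then 1 else 0)
    + ∑ l : Fin m, ((if (t:ℕ) = ι l - 1 then 1 else 0) + (if (t:ℕ) = ι l then 1 else 0))
def ind (ι : Fin m → ℕ) (i n k : ℕ) : ℕ := if k ∈ (Icc i n).image (gg ι) then 1 else 0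

lemma bb01 (N : ℕ) (ε : Fin N → Bool) (k : ℕ) : bb N ε k = 0 ∨ bb N ε k = 1 := by
  unfold bb; split_ifs <;> simp

lemma Yr_eq (N : ℕ) (ε : Fin N → Bool) (j : ℕ) (h1 : 1 ≤ j) (h2 : j ≤ N) :
    Yr N ε j = if ε ⟨j - 1, by omega⟩ then (1:ℝ) else -1 := by
  unfold Yr bb; rw [dif_pos ⟨h1, h2⟩]; split_ifs <;> norm_num

lemma mono_add (hmono : StrictMono ι) (d : ℕ) :
    ∀ (a b : Fin m), (b:ℕ) = (a:ℕ) + d → ι a + d ≤ ι b := by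
  induction d with
  | zero => intro a b h; have : a = b := Fin.ext (by omega); rw [this]; omega
  | succ d ih =>
    intro a b h
    have hb : (a:ℕ) + d < m := by have := b.isLt; omega
    have h1 := ih a ⟨(a:ℕ) + d, hb⟩ rfl
    have h2 : (⟨(a:ℕ) + d, hb⟩ : Fin m) < b := by rw [Fin.lt_def]; simp; omega
    have := hmono h2
    omega

variable {m : ℕ} {ι : Fin m → ℕ}

section
variable (hm : 1 ≤ m) (hmono : StrictMono ι) (hfirst : 1 < ι ⟨0, hm⟩)

include hm hmono in
lemma iota_ge (l : Fin m) : ι ⟨0, hm⟩ + (l : ℕ) ≤ ι l :=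
  mono_add hmono (l : ℕ) ⟨0, hm⟩ l (by simp)

include hm hmono in
lemma iota_le_last (l : Fin m) : ι l + (m - 1 - (l : ℕ)) ≤ ι ⟨m - 1, by omega⟩ :=
  mono_add hmono (m - 1 - (l : ℕ)) l ⟨m - 1, by omega⟩ (by have := l.isLt; simp; omega)

include hm hmono in
lemma sh_lt_first {j : ℕ} (hj : j < ι ⟨0, hm⟩) : sh ι j = 0 := by
  unfold sh
  rw [Finset.card_eq_zero, Finset.filter_eq_empty_iff]
  intro l _
  have := iota_ge hm hmono l
  omega

include hm hmono in
lemma sh_top {j : ℕ} (hj : ι ⟨m - 1, by omega⟩ ≤ j + (m - 1)) : sh ι j = m := by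
  unfold sh
  rw [Finset.filter_true_of_mem, Finset.card_univ, Fintype.card_fin]
  intro l _
  have h1 := iota_le_last hm hmono l
  have := l.isLt
  omega

include hm hmono in
lemma sh_mid {j k : ℕ} (hk : k + 1 ≤ m - 1) (h1 : ι ⟨k, by omega⟩ ≤ j + k)
    (h2 : j + (k + 1) < ι ⟨k + 1, by omega⟩) : sh ι j = k + 1 := by
  unfold sh
  have hset : (univ.filter fun l : Fin m => ι l ≤ j + (l : ℕ)) = Iic (⟨k, by omega⟩ : Fin m) := by
    ext l
    simp only [mem_filter, mem_univ, true_and, mem_Iic, Fin.le_def]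
    constructor
    · intro hl
      by_contra hc
      push_neg at hc
      have := mono_add hmono ((l : ℕ) - (k + 1)) ⟨k + 1, by omega⟩ l (by simp; omega)
      omega
    · intro hl
      have := mono_add hmono (k - (l : ℕ)) l ⟨k, by omega⟩ (by simp; omega)
      omega
  rw [hset, Fin.card_Iic]

lemma sh_mono : Monotone (sh ι) := by
  intro a b hab
  exact Finset.card_le_card (Finset.monotone_filter_right _ (fun l hl => by omega))

lemma gg_strictMono : StrictMono (gg ι) := by
  intro a b h
  have := sh_mono (ι := ι) h.le
  unfold gg; omega

lemma gg_ge (j : ℕ) : j ≤ gg ι j := Nat.le_add_right _ _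

include hm hmono in
lemma ghost_ne_gg (j : ℕ) (l : Fin m) : ι l ≠ gg ι j := by
  intro heq
  unfold gg at heq
  by_cases hc : ι l ≤ j + (l : ℕ)
  · have hsub : Finset.Iic l ⊆ univ.filter fun l' : Fin m => ι l' ≤ j + (l' : ℕ) := by
      intro l' hl'
      simp only [mem_Iic, Fin.le_def] at hl'
      simp only [mem_filter, mem_univ, true_and]
      have := mono_add hmono ((l : ℕ) - (l' : ℕ)) l' l (by omega)
      omega
    have := Finset.card_le_card hsub
    rw [Fin.card_Iic] at this
    unfold sh at heq
    omega
  · have hsub : (univ.filter fun l' : Fin m => ι l' ≤ j + (l' : ℕ)) ⊆ Finset.Iio l := by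
      intro l' hl'
      simp only [mem_filter, mem_univ, true_and] at hl'
      simp only [mem_Iio, Fin.lt_def]
      by_contra hc2
      push_neg at hc2
      have := mono_add hmono ((l' : ℕ) - (l : ℕ)) l l' (by omega)
      omega
    have := Finset.card_le_card hsub
    rw [Fin.card_Iio] at this
    unfold sh at heq
    omega

end

section
variable (hm : 1 ≤ m) (hmono : StrictMono ι) (hfirst : 1 < ι ⟨0, hm⟩)
  (hlast : ι ⟨m - 1, by omega⟩ < n + m)

include hm hmono hlast in
lemma gg_top : gg ι n = n + m := by
  unfold gg
  rw [sh_top hm hmono (by omega)]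

include hm hmono hlast in
lemma gg_le_top {j : ℕ} (hj : j ≤ n) : gg ι j ≤ n + m := by
  rw [← gg_top hm hmono hlast (n := n)]
  exact (gg_strictMono (ι := ι)).monotone hj

include hm hmono hfirst in
lemma iota_ge' (l : Fin m) : (l : ℕ) + 2 ≤ ι l := by
  have := iota_ge hm hmono l; omega

include hm hmono hfirst in
lemma interface (N : ℕ) (hN : N = n + m) (ε : Fin N → Bool) :
    MPlusBitsInterface n m hm ι (bb N ε) (fun j => bb N ε (gg ι j)) := by
  refine ⟨?_, ?_, ?_⟩
  · intro i h1 h2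
    simp only
    congr 1
    unfold gg
    rw [sh_lt_first hm hmono h2]
    omega
  · intro k hk i hik hik2
    simp only
    congr 1
    have hgei := iota_ge' hm hmono hfirst ⟨k, by omega⟩
    simp only at hgei
    have hgg : gg ι (i - (k + 1)) = i := by
      unfold gg
      rw [sh_mid hm hmono hk (by omega) (by omega)]
      omega
    rw [hgg]
  · intro i h1 h2
    simp only
    congr 1
    have hgei := iota_ge' hm hmono hfirst ⟨m - 1, by omega⟩
    simp only at hgei
    have hgg : gg ι (i - m) = i := by
      unfold gg
      rw [sh_top hm hmono (by omega)]
      omega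
    rw [hgg]

include hm hmono hfirst hlast in
lemma mem_image_iff {i₀ : ℕ} (hi₀1 : 1 ≤ i₀) (hi₀2 : i₀ < ι ⟨0, hm⟩) (k : ℕ) :
    k ∈ (Icc i₀ n).image (gg ι) ↔ (i₀ ≤ k ∧ k ≤ n + m ∧ ∀ l, ι l ≠ k) := by
  have hι0n : ι ⟨0, hm⟩ ≤ n := by
    have h1 := iota_le_last hm hmono ⟨0, hm⟩
    simp only at h1
    omega
  have hsub : (Icc i₀ n).image (gg ι) ⊆
      (Icc i₀ (n + m)) \ (univ.image ι) := by
    intro k hk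
    obtain ⟨j, hj, rfl⟩ := Finset.mem_image.1 hk
    rw [mem_Icc] at hj
    rw [Finset.mem_sdiff, mem_Icc]
    refine ⟨⟨le_trans hj.1 (gg_ge j), gg_le_top hm hmono hlast hj.2⟩, ?_⟩
    rw [Finset.mem_image]
    rintro ⟨l, -, hl⟩
    exact ghost_ne_gg hm hmono j l hl
  have hGsub : (univ.image ι) ⊆ Icc i₀ (n + m) := by
    intro k hk
    obtain ⟨l, -, rfl⟩ := Finset.mem_image.1 hk
    rw [mem_Icc]
    have h1 := iota_ge hm hmono l
    have h2 := iota_le_last hm hmono l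
    constructor <;> omega
  have hcard1 : ((Icc i₀ n).image (gg ι)).card = n + 1 - i₀ := by
    rw [Finset.card_image_of_injective _ (gg_strictMono (ι := ι)).injective, Nat.card_Icc]
  have hcard2 : ((Icc i₀ (n + m)) \ (univ.image ι)).card = n + 1 - i₀ := by
    rw [Finset.card_sdiff_of_subset hGsub, Nat.card_Icc,
      Finset.card_image_of_injective _ hmono.injective, Finset.card_univ, Fintype.card_fin]
    omega
  have heq := Finset.eq_of_subset_of_card_le hsub (by omega)
  rw [heq, Finset.mem_sdiff, mem_Icc, Finset.mem_image]
  constructor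
  · rintro ⟨⟨ha, hb⟩, hc⟩
    exact ⟨ha, hb, fun l hl => hc ⟨l, mem_univ l, hl⟩⟩
  · rintro ⟨ha, hb, hc⟩
    exact ⟨⟨ha, hb⟩, by rintro ⟨l, -, hl⟩; exact hc l hl⟩

end


-- ∏ over Icc 1 N rewritten as ∏ over Fin N
lemma prod_Icc_one {M : Type*} [CommMonoid M] (N : ℕ) (f : ℕ → M) :
    ∏ k ∈ Icc 1 N, f k = ∏ t : Fin N, f ((t : ℕ) + 1) := by
  rw [← Finset.Ico_add_one_right_eq_Icc, Finset.prod_Ico_eq_prod_range]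
  simp only [Nat.add_sub_cancel]
  rw [← Fin.prod_univ_eq_prod_range (fun i => f (1 + i)) N]
  exact Finset.prod_congr rfl (fun t _ => by rw [Nat.add_comm])

lemma lemA (N : ℕ) (E : ℕ → ℕ) :
    ∑ ε : Fin N → Bool, ∏ k ∈ Icc 1 N, (Yr N ε k) ^ (E k)
      = if ∀ k ∈ Icc 1 N, Even (E k) then (2 : ℝ) ^ N else 0 := by
  have hsummand : ∀ ε : Fin N → Bool,
      ∏ k ∈ Icc 1 N, (Yr N ε k) ^ (E k)
        = ∏ t : Fin N, (if ε t then (1:ℝ) else -1) ^ (E ((t : ℕ) + 1)) := by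
    intro ε
    rw [prod_Icc_one]
    refine Finset.prod_congr rfl (fun t _ => ?_)
    rw [Yr_eq N ε ((t : ℕ) + 1) (by omega) (by omega)]
    have ht : (⟨(t : ℕ) + 1 - 1, by omega⟩ : Fin N) = t := Fin.ext (by simp)
    rw [ht]
  simp only [hsummand]
  rw [← Fintype.piFinset_univ,
    ← Finset.prod_univ_sum (fun _ : Fin N => (univ : Finset Bool))
      (fun t β => (if β = true then (1:ℝ) else -1) ^ E ((t : ℕ) + 1))]
  have hfac : ∀ t : Fin N,
      (∑ β : Bool, (if β then (1:ℝ) else -1) ^ (E ((t : ℕ) + 1)))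
        = if Even (E ((t : ℕ) + 1)) then 2 else 0 := by
    intro t
    rw [Fintype.sum_bool]
    by_cases h : Even (E ((t : ℕ) + 1))
    · rw [if_pos h]; simp [h.neg_one_pow]; norm_num
    · rw [if_neg h]
      rw [Nat.not_even_iff_odd] at h
      simp [h.neg_one_pow]
  simp only [hfac]
  by_cases hall : ∀ t : Fin N, Even (E ((t : ℕ) + 1))
  · have hcond : ∀ k ∈ Icc 1 N, Even (E k) := by
      intro k hk
      rw [mem_Icc] at hk
      have := hall ⟨k - 1, by omega⟩
      simpa [Nat.sub_add_cancel hk.1] using this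
    rw [if_pos hcond]
    rw [Finset.prod_congr rfl (fun t _ => if_pos (hall t)), Finset.prod_const,
      Finset.card_univ, Fintype.card_fin]
  · push_neg at hall
    obtain ⟨t, ht⟩ := hall
    have hcond : ¬ ∀ k ∈ Icc 1 N, Even (E k) := by
      push_neg
      exact ⟨(t : ℕ) + 1, by rw [mem_Icc]; exact ⟨by omega, by omega⟩, ht⟩
    rw [if_neg hcond]
    exact Finset.prod_eq_zero (mem_univ t) (by rw [if_neg ht])

lemma swap_prod (N : ℕ) (ε : Fin N → Bool) (e : Fin N → ℕ) :
    ∏ t : Fin N, (xcoord N ε t) ^ (e t)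
      = ∏ k ∈ Icc 1 N, (Yr N ε k) ^ (cum N e k) := by
  unfold xcoord cum
  have h1 : ∀ t : Fin N, (∏ k ∈ Icc ((t:ℕ)+1) N, Yr N ε k) ^ (e t)
      = ∏ k ∈ Icc ((t:ℕ)+1) N, (Yr N ε k) ^ (e t) := fun t => by
    rw [Finset.prod_pow]
  simp only [h1]
  rw [Finset.prod_comm' (t' := Icc 1 N)
    (s' := fun k => univ.filter (fun t : Fin N => (t:ℕ) < k))
    (fun t k => by simp only [mem_univ, true_and, mem_Icc, mem_filter]; omega)]
  exact Finset.prod_congr rfl (fun k _ => by rw [Finset.prod_pow_eq_pow_sum])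

lemma cum_add (N : ℕ) (e e' : Fin N → ℕ) (k : ℕ) :
    cum N (fun t => e t + e' t) k = cum N e k + cum N e' k :=
  Finset.sum_add_distrib

lemma cum_zero (N : ℕ) (e : Fin N → ℕ) : cum N e 0 = 0 := by
  unfold cum
  rw [Finset.filter_false_of_mem (fun t _ => by omega), Finset.sum_empty]

lemma cum_succ (N : ℕ) (e : Fin N → ℕ) (j : ℕ) (hj : j < N) :
    cum N e (j + 1) = cum N e j + e ⟨j, hj⟩ := by
  unfold cum
  have : (univ.filter (fun t : Fin N => (t:ℕ) < j + 1))
      = insert ⟨j, hj⟩ (univ.filter (fun t : Fin N => (t:ℕ) < j)) := by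
    ext t
    simp only [mem_filter, mem_univ, true_and, mem_insert, Fin.ext_iff]
    omega
  rw [this, Finset.sum_insert (by simp)]
  ring

lemma even_all (N : ℕ) (e : Fin N → ℕ)
    (h : ∀ k ∈ Icc 1 N, Even (cum N e k)) (t : Fin N) : Even (e t) := by
  have h1 : Even (cum N e ((t:ℕ) + 1)) := h _ (by rw [mem_Icc]; exact ⟨by omega, by omega⟩)
  have h2 : Even (cum N e (t : ℕ)) := by
    rcases Nat.eq_zero_or_pos (t : ℕ) with hp | hp
    · rw [hp, cum_zero]; exact Even.zero
    · exact h _ (by rw [mem_Icc]; exact ⟨hp, by omega⟩)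
  rw [cum_succ N e (t : ℕ) t.isLt] at h1
  obtain ⟨a, ha⟩ := h1
  obtain ⟨b, hb⟩ := h2
  have ht : e ⟨(t:ℕ), t.isLt⟩ = e t := by congr
  exact ⟨a - b, by omega⟩

-- counting: sum over t < k of an indicator
lemma count_lt (N : ℕ) (v k : ℕ) (hv : v < N) :
    cum N (fun t : Fin N => if (t : ℕ) = v then 1 else 0) k = if v < k then 1 else 0 := by
  unfold cum
  have h1 : ∀ t : Fin N, ((t : ℕ) = v) = (t = ⟨v, hv⟩) := by
    intro t; rw [eq_iff_iff, Fin.ext_iff]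
  simp only [h1]
  rw [Finset.sum_ite_eq' _ (⟨v, hv⟩ : Fin N) (fun _ => 1)]
  simp only [mem_filter, mem_univ, true_and]

variable {m n : ℕ} {ι : Fin m → ℕ}

section
variable (hm : 1 ≤ m) (hmono : StrictMono ι) (hfirst : 1 < ι ⟨0, hm⟩)
  (hlast : ι ⟨m - 1, by omega⟩ < n + m)

lemma cum_finsum {κ : Type*} (N : ℕ) (s : Finset κ) (F : κ → Fin N → ℕ) (k : ℕ) :
    cum N (fun t => ∑ l ∈ s, F l t) k = ∑ l ∈ s, cum N (F l) k := by
  unfold cum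
  rw [Finset.sum_comm]

include hmono in
lemma count_ghost (k : ℕ) :
    ∑ l : Fin m, (if ι l = k then (1:ℕ) else 0) = if ∃ l, ι l = k then 1 else 0 := by
  by_cases h : ∃ l, ι l = k
  · obtain ⟨l₀, h₀⟩ := h
    rw [if_pos ⟨l₀, h₀⟩, Finset.sum_eq_single l₀
      (fun l _ hne => if_neg (fun he => hne (hmono.injective (he.trans h₀.symm))))
      (fun hc => absurd (mem_univ l₀) hc), if_pos h₀]
  · push_neg at h
    rw [if_neg (by push_neg; exact h)]
    exact Finset.sum_eq_zero (fun l _ => if_neg (h l))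

include hm hmono hfirst hlast in
lemma cum_sig {i₀ : ℕ} (hi₀1 : 1 ≤ i₀) (hi₀2 : i₀ < ι ⟨0, hm⟩) (k : ℕ) :
    cum (n + m) (sig ι i₀ (n + m)) k
      = (if i₀ ≤ k then 1 else 0)
        + (2 * ∑ l : Fin m, (if ι l < k then (1:ℕ) else 0)
            + (if ∃ l, ι l = k then 1 else 0)) := by
  have hι0n : ι ⟨0, hm⟩ ≤ n := by
    have h1 := iota_le_last hm hmono ⟨0, hm⟩
    simp only at h1
    omega
  have hsplit : cum (n + m) (sig ι i₀ (n + m)) k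
      = cum (n + m) (fun t => if (t:ℕ) = i₀ - 1 then 1 else 0) k
        + cum (n + m) (fun t => ∑ l : Fin m,
            ((if (t:ℕ) = ι l - 1 then 1 else 0) + (if (t:ℕ) = ι l then 1 else 0))) k :=
    cum_add _ _ _ _
  rw [hsplit, count_lt (n + m) (i₀ - 1) k (by omega)]
  have h2 : cum (n + m) (fun t => ∑ l : Fin m,
      ((if (t:ℕ) = ι l - 1 then 1 else 0) + (if (t:ℕ) = ι l then 1 else 0))) k
      = ∑ l : Fin m, ((if ι l - 1 < k then (1:ℕ) else 0) + (if ι l < k then 1 else 0)) := by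
    rw [cum_finsum]
    refine Finset.sum_congr rfl (fun l _ => ?_)
    have hl1 := iota_ge hm hmono l
    have hl2 := iota_le_last hm hmono l
    have hlN : ι l < n + m := by have := l.isLt; omega
    rw [cum_add (n + m) (fun t => if (t:ℕ) = ι l - 1 then 1 else 0)
        (fun t => if (t:ℕ) = ι l then 1 else 0) k,
      count_lt (n + m) (ι l - 1) k (by omega), count_lt (n + m) (ι l) k hlN]
  rw [h2]
  have h3 : ∀ l : Fin m, (if ι l - 1 < k then (1:ℕ) else 0) + (if ι l < k then 1 else 0)
      = 2 * (if ι l < k then 1 else 0) + (if ι l = k then 1 else 0) := by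
    intro l
    have hl1 := iota_ge hm hmono l
    split_ifs <;> omega
  rw [Finset.sum_congr rfl (fun l _ => h3 l), Finset.sum_add_distrib, ← Finset.mul_sum,
    count_ghost hmono k]
  have : (if i₀ - 1 < k then (1:ℕ) else 0) = if i₀ ≤ k then 1 else 0 := by
    split_ifs <;> omega
  omega

include hm hmono hfirst hlast in
lemma even_main {i₀ : ℕ} (hi₀1 : 1 ≤ i₀) (hi₀2 : i₀ < ι ⟨0, hm⟩) (k : ℕ)
    (hk1 : 1 ≤ k) (hk2 : k ≤ n + m) :
    Even (ind ι i₀ n k + cum (n + m) (sig ι i₀ (n + m)) k) := by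
  rw [cum_sig hm hmono hfirst hlast hi₀1 hi₀2 k]
  unfold ind
  rw [if_congr (mem_image_iff hm hmono hfirst hlast hi₀1 hi₀2 k) rfl rfl]
  set C := ∑ l : Fin m, (if ι l < k then (1:ℕ) else 0) with hC
  by_cases hG : ∃ l, ι l = k
  · obtain ⟨l₀, hl₀⟩ := hG
    have h1 : i₀ ≤ k := by have := iota_ge hm hmono l₀; omega
    rw [if_pos (⟨l₀, hl₀⟩ : ∃ l, ι l = k), if_pos h1,
      if_neg (show ¬(i₀ ≤ k ∧ k ≤ n + m ∧ ∀ l, ι l ≠ k) from fun hh => hh.2.2 l₀ hl₀)]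
    exact ⟨C + 1, by ring⟩
  · rw [if_neg hG]
    by_cases h1 : i₀ ≤ k
    · rw [if_pos h1, if_pos (show i₀ ≤ k ∧ k ≤ n + m ∧ ∀ l, ι l ≠ k from
        ⟨h1, hk2, (by push_neg at hG; exact hG)⟩)]
      exact ⟨C + 1, by ring⟩
    · rw [if_neg h1, if_neg (fun hh => h1 hh.1)]
      exact ⟨C, by ring⟩

include hm hmono hfirst hlast in
lemma cum_sig_low {i₀ : ℕ} (hi₀1 : 1 ≤ i₀) (hi₀2 : i₀ < ι ⟨0, hm⟩) (k : ℕ)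
    (hk : k ≤ i₀) : cum (n + m) (sig ι i₀ (n + m)) k = if i₀ ≤ k then 1 else 0 := by
  rw [cum_sig hm hmono hfirst hlast hi₀1 hi₀2 k]
  have hC : ∀ l : Fin m, ¬ (ι l < k) := by
    intro l; have := iota_ge hm hmono l; omega
  have hG : ¬ ∃ l, ι l = k := by
    rintro ⟨l, hl⟩; have := iota_ge hm hmono l; omega
  rw [if_neg hG, Finset.sum_eq_zero (fun l _ => if_neg (hC l))]
  omega

include hm hmono hfirst hlast in
lemma ind_self {i : ℕ} (hi1 : 1 ≤ i) (hi2 : i < ι ⟨0, hm⟩) : ind ι i n i = 1 := by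
  have hι0n : ι ⟨0, hm⟩ ≤ n := by
    have h1 := iota_le_last hm hmono ⟨0, hm⟩
    simp only at h1
    omega
  unfold ind
  rw [if_pos]
  refine Finset.mem_image.2 ⟨i, Finset.mem_Icc.2 ⟨le_refl i, by omega⟩, ?_⟩
  unfold gg
  rw [sh_lt_first hm hmono hi2]
  omega

lemma ind_zero_of_lt {i k : ℕ} (hk : k < i) : ind ι i n k = 0 := by
  unfold ind
  rw [if_neg]
  intro hmem
  obtain ⟨j, hj, hjk⟩ := Finset.mem_image.1 hmem
  rw [Finset.mem_Icc] at hj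
  have := gg_ge (ι := ι) j
  omega

include hm hmono hfirst in
lemma sig_le_one {i₀ : ℕ} (hi₀2 : i₀ < ι ⟨0, hm⟩) (N : ℕ)
    (hnc : ∀ a b : Fin m, a < b → ι a + 2 ≤ ι b) (t : Fin N) :
    sig ι i₀ N t ≤ 1 := by
  unfold sig
  by_cases hex : ∃ l : Fin m, (t:ℕ) = ι l - 1 ∨ (t:ℕ) = ι l
  · obtain ⟨l₀, hl₀⟩ := hex
    have hl₀2 := iota_ge hm hmono l₀
    have h0 : (if (t:ℕ) = i₀ - 1 then (1:ℕ) else 0) = 0 := by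
      rw [if_neg]; omega
    have hsum : ∑ l : Fin m, ((if (t:ℕ) = ι l - 1 then (1:ℕ) else 0)
        + (if (t:ℕ) = ι l then 1 else 0))
        = (if (t:ℕ) = ι l₀ - 1 then (1:ℕ) else 0) + (if (t:ℕ) = ι l₀ then 1 else 0) := by
      refine Finset.sum_eq_single l₀ ?_ (fun hc => absurd (mem_univ l₀) hc)
      intro l _ hne
      have hll : ι l + 2 ≤ ι l₀ ∨ ι l₀ + 2 ≤ ι l := by
        rcases lt_or_gt_of_ne hne with h | h
        · exact Or.inl (hnc l l₀ h)
        · exact Or.inr (hnc l₀ l h)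
      have hl2 := iota_ge hm hmono l
      rw [if_neg (by omega), if_neg (by omega)]
      rfl
    rw [h0, hsum]
    have := iota_ge hm hmono l₀
    split_ifs <;> omega
  · push_neg at hex
    have hsum : ∑ l : Fin m, ((if (t:ℕ) = ι l - 1 then (1:ℕ) else 0)
        + (if (t:ℕ) = ι l then 1 else 0)) = 0 :=
      Finset.sum_eq_zero (fun l _ => by
        rw [if_neg (hex l).1, if_neg (hex l).2]
        rfl)
    rw [hsum]
    split_ifs <;> omega

include hm hmono hfirst hlast in
lemma sig_sum {i₀ : ℕ} (hi₀1 : 1 ≤ i₀) (hi₀2 : i₀ < ι ⟨0, hm⟩) :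
    ∑ t : Fin (n + m), sig ι i₀ (n + m) t = 2 * m + 1 := by
  have hι0n : ι ⟨0, hm⟩ ≤ n := by
    have h1 := iota_le_last hm hmono ⟨0, hm⟩
    simp only at h1
    omega
  have hcount : ∀ v : ℕ, v < n + m →
      ∑ t : Fin (n + m), (if (t:ℕ) = v then (1:ℕ) else 0) = 1 := by
    intro v hv
    have h1 : ∀ t : Fin (n + m), ((t : ℕ) = v) = (t = ⟨v, hv⟩) := by
      intro t; rw [eq_iff_iff, Fin.ext_iff]
    simp only [h1]
    rw [Finset.sum_ite_eq' _ (⟨v, hv⟩ : Fin (n + m)) (fun _ => 1), if_pos (mem_univ _)]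
  unfold sig
  rw [Finset.sum_add_distrib, hcount (i₀ - 1) (by omega), Finset.sum_comm]
  have h2 : ∀ l : Fin m, ∑ t : Fin (n + m), ((if (t:ℕ) = ι l - 1 then (1:ℕ) else 0)
      + (if (t:ℕ) = ι l then 1 else 0)) = 2 := by
    intro l
    have hl1 := iota_ge hm hmono l
    have hl2 := iota_le_last hm hmono l
    have hlN : ι l < n + m := by have := l.isLt; omega
    rw [Finset.sum_add_distrib, hcount (ι l - 1) (by omega), hcount (ι l) hlN]
  rw [Finset.sum_congr rfl (fun l _ => h2 l), Finset.sum_const, Finset.card_univ,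
    Fintype.card_fin, smul_eq_mul]
  ring

include hm hmono hlast in
lemma phi_Y (ε : Fin (n + m) → Bool) {i : ℕ} (hi : 1 ≤ i) :
    ((∏ k ∈ Icc i n, (2 * bb (n + m) ε (gg ι k) - 1) : ℤ) : ℝ)
      = ∏ k ∈ Icc 1 (n + m), (Yr (n + m) ε k) ^ (ind ι i n k) := by
  rw [Int.cast_prod]
  have h1 : ∀ k ∈ Icc i n, ((2 * bb (n + m) ε (gg ι k) - 1 : ℤ) : ℝ)
      = Yr (n + m) ε (gg ι k) := fun k _ => rfl
  rw [Finset.prod_congr rfl h1,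
    ← Finset.prod_image (f := Yr (n + m) ε)
      (g := gg ι) (fun x _ y _ h => (gg_strictMono (ι := ι)).injective h)]
  have hsub : (Icc i n).image (gg ι) ⊆ Icc 1 (n + m) := by
    intro k hk
    obtain ⟨j, hj, rfl⟩ := Finset.mem_image.1 hk
    rw [Finset.mem_Icc] at hj
    rw [Finset.mem_Icc]
    have := gg_ge (ι := ι) j
    exact ⟨by omega, gg_le_top hm hmono hlast hj.2⟩
  have h2 : ∏ k ∈ (Icc i n).image (gg ι), Yr (n + m) ε k
      = ∏ k ∈ (Icc i n).image (gg ι), (Yr (n + m) ε k) ^ (ind ι i n k) :=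
    Finset.prod_congr rfl (fun k hk => by rw [ind, if_pos hk, pow_one])
  rw [h2]
  exact Finset.prod_subset hsub (fun k _ hk => by rw [ind, if_neg hk, pow_zero])

end
end S10

/-- Theorem 1, lower bound on the order: if no two ghost
positions are consecutive, `1 < ι 0`, `ι (m-1) < n + m`, and some weight
`w i` with `1 ≤ i < ι 0` is nonzero, then every polynomial representing the
APUF delay sum in terms of the observable features has total degree at least
`2m + 1`. -/
theorem stmt10 (n m : ℕ) (hn : 1 ≤ n) (hm : 1 ≤ m)
    (ι : Fin m → ℕ) (hmono : StrictMono ι)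
    (hfirst : 1 < ι ⟨0, hm⟩) (hlast : ι ⟨m - 1, by omega⟩ < n + m)
    (hnc : ∀ k (hk : k + 1 ≤ m - 1), ι ⟨k, by omega⟩ + 1 < ι ⟨k + 1, by omega⟩)
    (v : ℝ) (w : ℕ → ℝ)
    (hw : ∃ i, 1 ≤ i ∧ i < ι ⟨0, hm⟩ ∧ w i ≠ 0) :
    ∀ p : MvPolynomial (Fin (n + m)) ℝ,
      (∀ (b c : ℕ → ℤ), (∀ k, b k = 0 ∨ b k = 1) →
        MPlusBitsInterface n m hm ι b c →
        v + ∑ i ∈ Finset.Icc 1 n,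
            w i * ((∏ k ∈ Finset.Icc i n, (2 * c k - 1) : ℤ) : ℝ)
          = MvPolynomial.eval
              (fun t : Fin (n + m) =>
                ((∏ k ∈ Finset.Icc ((t : ℕ) + 1) (n + m), (2 * b k - 1) : ℤ) : ℝ))
              p) →
      2 * m + 1 ≤ p.totalDegree := by
  intro p hp
  classical
  obtain ⟨i₀, hi₀1, hi₀2, hw0⟩ := hw
  have hι0n : ι ⟨0, hm⟩ ≤ n := by
    have h1 := S10.iota_le_last hm hmono ⟨0, hm⟩
    simp only at h1
    omega
  have hgap : ∀ a b : Fin m, a < b → ι a + 2 ≤ ι b := by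
    intro a b hab
    have hab' : (a : ℕ) < (b : ℕ) := hab
    have h1 : (a : ℕ) + 1 ≤ m - 1 := by have := b.isLt; omega
    have hc : (a : ℕ) + 1 < m := by omega
    have h2 : ι a + 1 < ι (⟨(a : ℕ) + 1, hc⟩ : Fin m) := hnc (a : ℕ) h1
    have h4 := S10.mono_add hmono ((b : ℕ) - ((a : ℕ) + 1)) ⟨(a : ℕ) + 1, hc⟩ b
      (by simp; omega)
    omega
  by_cases hd : ∀ d ∈ p.support, ∃ k ∈ Finset.Icc 1 (n + m),
      ¬ Even (S10.cum (n + m) (fun t => d t + S10.sig ι i₀ (n + m) t) k)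
  swap
  · -- some monomial has all-even exponents: direct degree bound
    push_neg at hd
    obtain ⟨d, hd1, hd2⟩ := hd
    have hpt : ∀ t : Fin (n + m), Even (d t + S10.sig ι i₀ (n + m) t) :=
      S10.even_all (n + m) _ (by simpa using hd2)
    have hge : ∀ t : Fin (n + m), S10.sig ι i₀ (n + m) t ≤ d t := by
      intro t
      have h1 := S10.sig_le_one hm hmono hfirst hi₀2 (n + m) hgap t
      obtain ⟨r, hr⟩ := hpt t
      omega
    have hsum : ∑ t : Fin (n + m), S10.sig ι i₀ (n + m) t ≤ ∑ t : Fin (n + m), d t :=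
      Finset.sum_le_sum (fun t _ => hge t)
    rw [S10.sig_sum hm hmono hfirst hlast hi₀1 hi₀2] at hsum
    have hle := MvPolynomial.le_totalDegree hd1
    rw [Finsupp.sum_fintype _ _ (fun _ => rfl)] at hle
    omega
  · -- every monomial pairs to zero; derive contradiction
    exfalso
    have key : ∀ ε : Fin (n + m) → Bool,
        v + ∑ i ∈ Finset.Icc 1 n, w i *
            ((∏ k ∈ Finset.Icc i n, (2 * S10.bb (n + m) ε (S10.gg ι k) - 1) : ℤ) : ℝ)
          = MvPolynomial.eval (S10.xcoord (n + m) ε) p := by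
      intro ε
      have h := hp (S10.bb (n + m) ε) (fun j => S10.bb (n + m) ε (S10.gg ι j))
        (S10.bb01 _ ε) (S10.interface hm hmono hfirst (n + m) rfl ε)
      have hx : (fun t : Fin (n + m) => ((∏ k ∈ Finset.Icc ((t : ℕ) + 1) (n + m),
          (2 * S10.bb (n + m) ε k - 1) : ℤ) : ℝ)) = S10.xcoord (n + m) ε := by
        funext t
        rw [Int.cast_prod]
        rfl
      rw [hx] at h
      exact h
    have hR : ∑ ε : Fin (n + m) → Bool, (MvPolynomial.eval (S10.xcoord (n + m) ε) p)
        * (∏ t : Fin (n + m), (S10.xcoord (n + m) ε t) ^ (S10.sig ι i₀ (n + m) t)) = 0 := by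
      have hper : ∀ ε : Fin (n + m) → Bool,
          (MvPolynomial.eval (S10.xcoord (n + m) ε) p)
            * (∏ t : Fin (n + m), (S10.xcoord (n + m) ε t) ^ (S10.sig ι i₀ (n + m) t))
          = ∑ d ∈ p.support, (MvPolynomial.coeff d p) *
              ∏ k ∈ Finset.Icc 1 (n + m), (S10.Yr (n + m) ε k)
                ^ (S10.cum (n + m) (fun t => d t + S10.sig ι i₀ (n + m) t) k) := by
        intro ε
        rw [MvPolynomial.eval_eq', Finset.sum_mul]
        refine Finset.sum_congr rfl (fun d hd => ?_)
        rw [mul_assoc]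
        congr 1
        rw [← S10.swap_prod, ← Finset.prod_mul_distrib]
        exact Finset.prod_congr rfl (fun t _ => (pow_add _ _ _).symm)
      rw [Finset.sum_congr rfl (fun ε _ => hper ε), Finset.sum_comm]
      refine Finset.sum_eq_zero (fun d hdsup => ?_)
      rw [← Finset.mul_sum, S10.lemA, if_neg, mul_zero]
      intro hall
      obtain ⟨k, hk1, hk2⟩ := hd d hdsup
      exact hk2 (hall k hk1)
    have hchi : ∀ ε : Fin (n + m) → Bool,
        (∏ t : Fin (n + m), (S10.xcoord (n + m) ε t) ^ (S10.sig ι i₀ (n + m) t))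
          = ∏ k ∈ Finset.Icc 1 (n + m), (S10.Yr (n + m) ε k)
              ^ (S10.cum (n + m) (S10.sig ι i₀ (n + m)) k) :=
      fun ε => S10.swap_prod _ _ _
    have hchi0 : ∑ ε : Fin (n + m) → Bool,
        (∏ t : Fin (n + m), (S10.xcoord (n + m) ε t) ^ (S10.sig ι i₀ (n + m) t)) = 0 := by
      rw [Finset.sum_congr rfl (fun ε _ => hchi ε), S10.lemA, if_neg]
      intro hall
      have h1 := hall i₀ (Finset.mem_Icc.2 ⟨hi₀1, by omega⟩)
      rw [S10.cum_sig_low hm hmono hfirst hlast hi₀1 hi₀2 i₀ le_rfl, if_pos le_rfl] at h1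
      simp at h1
    have hphi : ∀ i ∈ Finset.Icc 1 n, ∑ ε : Fin (n + m) → Bool,
        ((∏ k ∈ Finset.Icc i n, (2 * S10.bb (n + m) ε (S10.gg ι k) - 1) : ℤ) : ℝ)
          * (∏ t : Fin (n + m), (S10.xcoord (n + m) ε t) ^ (S10.sig ι i₀ (n + m) t))
        = if i = i₀ then (2 : ℝ) ^ (n + m) else 0 := by
      intro i hi
      rw [Finset.mem_Icc] at hi
      have hper : ∀ ε : Fin (n + m) → Bool,
          ((∏ k ∈ Finset.Icc i n, (2 * S10.bb (n + m) ε (S10.gg ι k) - 1) : ℤ) : ℝ)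
            * (∏ t : Fin (n + m), (S10.xcoord (n + m) ε t) ^ (S10.sig ι i₀ (n + m) t))
          = ∏ k ∈ Finset.Icc 1 (n + m), (S10.Yr (n + m) ε k)
              ^ (S10.ind ι i n k + S10.cum (n + m) (S10.sig ι i₀ (n + m)) k) := by
        intro ε
        rw [S10.phi_Y hm hmono hlast ε hi.1, hchi ε, ← Finset.prod_mul_distrib]
        exact Finset.prod_congr rfl (fun k _ => (pow_add _ _ _).symm)
      rw [Finset.sum_congr rfl (fun ε _ => hper ε), S10.lemA]
      by_cases hii : i = i₀
      · subst hii
        rw [if_pos rfl, if_pos]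
        intro k hk
        rw [Finset.mem_Icc] at hk
        exact S10.even_main hm hmono hfirst hlast hi₀1 hi₀2 k hk.1 hk.2
      · rw [if_neg hii, if_neg]
        intro hall
        rcases lt_or_gt_of_ne hii with h | h
        · have h1 := hall i (Finset.mem_Icc.2 ⟨hi.1, by omega⟩)
          rw [S10.ind_self hm hmono hfirst hlast hi.1 (lt_trans h hi₀2),
            S10.cum_sig_low hm hmono hfirst hlast hi₀1 hi₀2 i (le_of_lt h),
            if_neg (by omega)] at h1
          simp at h1
        · have h1 := hall i₀ (Finset.mem_Icc.2 ⟨hi₀1, by omega⟩)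
          rw [S10.ind_zero_of_lt h,
            S10.cum_sig_low hm hmono hfirst hlast hi₀1 hi₀2 i₀ le_rfl,
            if_pos le_rfl] at h1
          simp at h1
    have hL : ∑ ε : Fin (n + m) → Bool,
        (v + ∑ i ∈ Finset.Icc 1 n, w i *
            ((∏ k ∈ Finset.Icc i n, (2 * S10.bb (n + m) ε (S10.gg ι k) - 1) : ℤ) : ℝ))
          * (∏ t : Fin (n + m), (S10.xcoord (n + m) ε t) ^ (S10.sig ι i₀ (n + m) t))
        = w i₀ * (2 : ℝ) ^ (n + m) := by
      have hexp : ∀ ε : Fin (n + m) → Bool,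
          (v + ∑ i ∈ Finset.Icc 1 n, w i *
              ((∏ k ∈ Finset.Icc i n, (2 * S10.bb (n + m) ε (S10.gg ι k) - 1) : ℤ) : ℝ))
            * (∏ t : Fin (n + m), (S10.xcoord (n + m) ε t) ^ (S10.sig ι i₀ (n + m) t))
          = v * (∏ t : Fin (n + m), (S10.xcoord (n + m) ε t) ^ (S10.sig ι i₀ (n + m) t))
            + ∑ i ∈ Finset.Icc 1 n, w i *
                (((∏ k ∈ Finset.Icc i n, (2 * S10.bb (n + m) ε (S10.gg ι k) - 1) : ℤ) : ℝ)
                  * (∏ t : Fin (n + m), (S10.xcoord (n + m) ε t) ^ (S10.sig ι i₀ (n + m) t))) := by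
        intro ε
        rw [add_mul, Finset.sum_mul]
        congr 1
        exact Finset.sum_congr rfl (fun i _ => by ring)
      rw [Finset.sum_congr rfl (fun ε _ => hexp ε), Finset.sum_add_distrib,
        ← Finset.mul_sum, hchi0, mul_zero, zero_add, Finset.sum_comm]
      have hterm : ∀ i ∈ Finset.Icc 1 n,
          ∑ ε : Fin (n + m) → Bool, w i *
            (((∏ k ∈ Finset.Icc i n, (2 * S10.bb (n + m) ε (S10.gg ι k) - 1) : ℤ) : ℝ)
              * (∏ t : Fin (n + m), (S10.xcoord (n + m) ε t) ^ (S10.sig ι i₀ (n + m) t)))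
          = w i * (if i = i₀ then (2 : ℝ) ^ (n + m) else 0) := by
        intro i hi
        rw [← Finset.mul_sum, hphi i hi]
      rw [Finset.sum_congr rfl hterm, Finset.sum_eq_single i₀
        (fun i _ hne => by rw [if_neg hne, mul_zero])
        (fun hc => absurd (Finset.mem_Icc.2 ⟨hi₀1, by omega⟩) hc), if_pos rfl]
    rw [Finset.sum_congr rfl (fun ε _ => by rw [key ε]), hR] at hL
    have h2 : (2 : ℝ) ^ (n + m) ≠ 0 := by positivity
    exact hw0 (by
      rcases mul_eq_zero.1 hL.symm with h | h
      · exact h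
      · exact absurd h h2)
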